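/- Let γ(t) = t + i·y(t), t ∈ [a,b], be a Lipschitz graph with y an L-Lipschitz function. Suppose z₁, …, z_m ∈ ℂ and β₁, …, β_m > 0 with β := β₁ + ⋯ + β_m < 1. Then ∫_a^b ∏_{i=1}^m |γ(t) − z_i|^{-β_i} |γ'(t)| dt ≤ C for a constant C depending only on L, a, b, β. -/

import Mathlib

open MeasureTheory Set Metric Complex Filter
open scoped ENNReal

/-- The point `t + i y(t)` of the graph of `y : ℝ → ℝ`. -/
noncomputable def graphPt (y : ℝ → ℝ) (t : ℝ) : ℂ := (t : ℂ) + (y t : ℂ) * Complex.I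

/-- The arc length element `√(1 + y'(t)²)` of the graph of `y`. -/
noncomputable def arcElt (y : ℝ → ℝ) (t : ℝ) : ℝ := Real.sqrt (1 + deriv y t ^ 2)

private lemma single_bound {β : ℝ} (hβ0 : 0 < β) {a b : ℝ} (hab : a < b) (x : ℝ) :
    ∫⁻ t in Set.Icc a b, ENNReal.ofReal (|t - x| ^ (-β)) ≤
      2 * (∫⁻ s in Set.Ioo (0:ℝ) (b - a), ENNReal.ofReal (s ^ (-β)))
        + ENNReal.ofReal ((b - a) * (b - a) ^ (-β)) := by
  set d := b - a with hd_def
  have hd : 0 < d := sub_pos.2 hab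
  set f : ℝ → ℝ≥0∞ := fun t => ENNReal.ofReal (|t - x| ^ (-β)) with hf
  set F : ℝ → ℝ≥0∞ := fun s => ENNReal.ofReal (|s| ^ (-β)) with hF
  have emb : MeasurableEmbedding (fun s : ℝ => s + x) :=
    (MeasurableEquiv.addRight x).measurableEmbedding
  have mp : MeasurePreserving (fun s : ℝ => s + x) volume volume :=
    measurePreserving_add_right volume x
  have hfF : ∀ s : ℝ, f (s + x) = F s := by
    intro s; simp only [hf, hF, add_sub_cancel_right]
  -- right piece
  have hP2 : ∫⁻ t in Set.Ioo x (x + d), f t = ∫⁻ s in Set.Ioo (0:ℝ) d, ENNReal.ofReal (s ^ (-β)) := by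
    have h2 := mp.setLIntegral_comp_preimage_emb emb f (Set.Ioo x (x + d))
    rw [preimage_add_const_Ioo] at h2
    rw [← h2]
    have : x - x = 0 := sub_self x
    rw [this, show x + d - x = d by ring]
    refine setLIntegral_congr_fun measurableSet_Ioo ?_
    intro s hs
    beta_reduce
    rw [hfF, hF]
    simp only [abs_of_pos hs.1]
  -- left piece
  have hP1 : ∫⁻ t in Set.Ioo (x - d) x, f t = ∫⁻ s in Set.Ioo (0:ℝ) d, ENNReal.ofReal (s ^ (-β)) := by
    have h3 := mp.setLIntegral_comp_preimage_emb emb f (Set.Ioo (x - d) x)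
    rw [preimage_add_const_Ioo] at h3
    rw [← h3, show x - d - x = -d by ring, sub_self]
    have h3' : ∫⁻ s in Set.Ioo (-d) (0:ℝ), f (s + x) = ∫⁻ s in Set.Ioo (-d) (0:ℝ), F s :=
      setLIntegral_congr_fun measurableSet_Ioo (fun s _ => hfF s)
    rw [h3']
    have mpn : MeasurePreserving (Neg.neg : ℝ → ℝ) volume volume :=
      Measure.measurePreserving_neg volume
    have h4 := mpn.setLIntegral_comp_preimage_emb measurableEmbedding_neg F (Set.Ioo (-d) 0)
    have hpre : (Neg.neg : ℝ → ℝ) ⁻¹' Set.Ioo (-d) 0 = Set.Ioo (0:ℝ) d := by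
      ext u
      simp only [Set.mem_preimage, Set.mem_Ioo]
      constructor <;> rintro ⟨h1, h2⟩ <;> constructor <;> linarith
    rw [hpre] at h4
    rw [← h4]
    refine setLIntegral_congr_fun measurableSet_Ioo ?_
    intro s hs
    simp only [hF, abs_neg, abs_of_pos hs.1]
  -- far piece
  have hP3 : ∫⁻ t in Set.Icc a b \ Set.Ioo (x - d) (x + d), f t
      ≤ ENNReal.ofReal (d * d ^ (-β)) := by
    have hb : ∀ t ∈ Set.Icc a b \ Set.Ioo (x - d) (x + d), f t ≤ ENNReal.ofReal (d ^ (-β)) := by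
      rintro t ⟨htI, htO⟩
      have hdist : d ≤ |t - x| := by
        rw [Set.mem_Ioo, not_and_or, not_lt, not_lt] at htO
        rcases htO with h | h
        · rw [_root_.abs_of_nonpos (by linarith)]; linarith
        · rw [_root_.abs_of_nonneg (by linarith)]; linarith
      exact ENNReal.ofReal_le_ofReal
        (Real.rpow_le_rpow_of_nonpos hd hdist (neg_nonpos.2 hβ0.le))
    calc ∫⁻ t in Set.Icc a b \ Set.Ioo (x - d) (x + d), f t
        ≤ ∫⁻ _ in Set.Icc a b \ Set.Ioo (x - d) (x + d), ENNReal.ofReal (d ^ (-β)) :=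
          setLIntegral_mono measurable_const hb
      _ = ENNReal.ofReal (d ^ (-β)) * volume (Set.Icc a b \ Set.Ioo (x - d) (x + d)) := by
          rw [setLIntegral_const]
      _ ≤ ENNReal.ofReal (d ^ (-β)) * volume (Set.Icc a b) :=
          mul_le_mul_right (measure_mono Set.diff_subset) _
      _ = ENNReal.ofReal (d * d ^ (-β)) := by
          rw [Real.volume_Icc, ← hd_def, ← ENNReal.ofReal_mul (Real.rpow_nonneg hd.le _),
            mul_comm]
  have hPx : ∫⁻ t in ({x} : Set ℝ), f t = 0 := by
    rw [show volume.restrict ({x} : Set ℝ) = 0 from Measure.restrict_eq_zero.2 (by simp),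
      lintegral_zero_measure]
  -- assemble
  have hsub : Set.Icc a b ⊆ (Set.Ioo (x - d) x ∪ Set.Ioo x (x + d)) ∪
      ((Set.Icc a b \ Set.Ioo (x - d) (x + d)) ∪ {x}) := by
    intro t ht
    by_cases h : t ∈ Set.Ioo (x - d) (x + d)
    · rcases lt_trichotomy t x with h1 | rfl | h1
      · exact Or.inl (Or.inl ⟨h.1, h1⟩)
      · exact Or.inr (Or.inr rfl)
      · exact Or.inl (Or.inr ⟨h1, h.2⟩)
    · exact Or.inr (Or.inl ⟨ht, h⟩)
  calc ∫⁻ t in Set.Icc a b, f t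
      ≤ ∫⁻ t in (Set.Ioo (x - d) x ∪ Set.Ioo x (x + d)) ∪
          ((Set.Icc a b \ Set.Ioo (x - d) (x + d)) ∪ {x}), f t := lintegral_mono_set hsub
    _ ≤ (∫⁻ t in Set.Ioo (x - d) x ∪ Set.Ioo x (x + d), f t)
        + ∫⁻ t in (Set.Icc a b \ Set.Ioo (x - d) (x + d)) ∪ {x}, f t :=
        lintegral_union_le _ _ _
    _ ≤ ((∫⁻ t in Set.Ioo (x - d) x, f t) + ∫⁻ t in Set.Ioo x (x + d), f t)
        + ((∫⁻ t in Set.Icc a b \ Set.Ioo (x - d) (x + d), f t) + ∫⁻ t in ({x} : Set ℝ), f t) :=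
        add_le_add (lintegral_union_le _ _ _) (lintegral_union_le _ _ _)
    _ ≤ 2 * (∫⁻ s in Set.Ioo (0:ℝ) d, ENNReal.ofReal (s ^ (-β)))
        + ENNReal.ofReal (d * d ^ (-β)) := by
        rw [hP1, hP2, hPx, add_zero, two_mul]
        exact add_le_add le_rfl hP3

/-- Product version: if `β₁, …, β_m > 0` and `β₁ + ⋯ + β_m = β < 1`, then
`∫_a^b ∏_i |γ(t) - z_i|^{-β_i} |γ'(t)| dt ≤ C` for a constant `C` depending only on
`L, a, b, β`. -/
theorem lipschitz_graph_rpow_product_integral_bound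
    (L a b β : ℝ) (hab : a ≤ b) (hL : 0 ≤ L) (hβ0 : 0 < β) (hβ1 : β < 1) :
    ∃ C : ℝ, ∀ (y : ℝ → ℝ), LipschitzOnWith L.toNNReal y (Set.Icc a b) →
      ∀ (m : ℕ) (z : Fin m → ℂ) (βi : Fin m → ℝ),
        (∀ i, 0 < βi i) → (∑ i, βi i) = β →
        (∫⁻ t in Set.Icc a b,
            ENNReal.ofReal
              ((∏ i, Real.rpow (‖graphPt y t - z i‖) (-(βi i))) * arcElt y t))
          ≤ ENNReal.ofReal C := by
  rcases eq_or_lt_of_le hab with rfl | hab'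
  · refine ⟨1, fun y hy m z βi hpos hsum => ?_⟩
    rw [show volume.restrict (Set.Icc a a) = 0 from Measure.restrict_eq_zero.2 (by simp),
      lintegral_zero_measure]
    exact zero_le
  set d := b - a with hd_def
  have hd : 0 < d := sub_pos.2 hab'
  set K := Real.sqrt (1 + L ^ 2) with hK
  have hK0 : 0 ≤ K := Real.sqrt_nonneg _
  set I1 : ℝ≥0∞ := ∫⁻ s in Set.Ioo (0:ℝ) d, ENNReal.ofReal (s ^ (-β)) with hI1
  have hI1top : I1 ≠ ∞ := by
    have hint : IntegrableOn (fun s : ℝ => s ^ (-β)) (Set.Ioo 0 d) :=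
      (intervalIntegral.integrableOn_Ioo_rpow_iff hd).2 (by linarith)
    refine (lintegral_ofReal_ne_top_iff_integrable hint.aestronglyMeasurable ?_).2 hint
    filter_upwards [ae_restrict_mem measurableSet_Ioo] with s hs
    exact Real.rpow_nonneg hs.1.le _
  set J : ℝ≥0∞ := 2 * I1 + ENNReal.ofReal (d * d ^ (-β)) with hJ
  have hJtop : J ≠ ∞ := by
    rw [hJ]
    exact ENNReal.add_ne_top.2 ⟨ENNReal.mul_ne_top (by norm_num) hI1top, ENNReal.ofReal_ne_top⟩
  refine ⟨K * J.toReal, fun y hy m z βi hpos hsum => ?_⟩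
  set x : Fin m → ℝ := fun i => (z i).re with hx
  set c : Fin m → ℝ := fun i => βi i / β with hc
  have hc0 : ∀ i, 0 ≤ c i := fun i => div_nonneg (hpos i).le hβ0.le
  have hcsum : ∑ i, c i = 1 := by
    simp only [hc]
    rw [← Finset.sum_div, hsum, div_self hβ0.ne']
  have key : ∀ᵐ t ∂(volume.restrict (Set.Icc a b)),
      ENNReal.ofReal
          ((∏ i, Real.rpow (‖graphPt y t - z i‖) (-(βi i))) * arcElt y t)
        ≤ ∑ i, ENNReal.ofReal (c i * K) * ENNReal.ofReal (|t - x i| ^ (-β)) := by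
    have hbad : ∀ᵐ t ∂(volume.restrict (Set.Icc a b)),
        t ∉ (({a, b} : Set ℝ) ∪ Set.range x) := by
      refine ae_restrict_of_ae ?_
      have hfin : ((({a, b} : Set ℝ) ∪ Set.range x)).Finite :=
        ((Set.finite_singleton b).insert a).union (Set.finite_range _)
      have h0 : volume (({a, b} : Set ℝ) ∪ Set.range x) = 0 := hfin.measure_zero _
      exact measure_eq_zero_iff_ae_notMem.1 h0
    filter_upwards [hbad, ae_restrict_mem measurableSet_Icc] with t hbt htI
    simp only [Set.mem_union, Set.mem_insert_iff, Set.mem_singleton_iff, Set.mem_range,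
      not_or, not_exists] at hbt
    obtain ⟨⟨hta, htb⟩, htx⟩ := hbt
    have hIoo : t ∈ Set.Ioo a b := ⟨lt_of_le_of_ne htI.1 (Ne.symm hta), lt_of_le_of_ne htI.2 htb⟩
    have harc : arcElt y t ≤ K := by
      have hderiv : |deriv y t| ≤ L := by
        have h1 : ‖fderiv ℝ y t‖ ≤ (L.toNNReal : ℝ) :=
          norm_fderiv_le_of_lipschitzOn ℝ (Icc_mem_nhds hIoo.1 hIoo.2) hy
        have h2 : |deriv y t| ≤ ‖fderiv ℝ y t‖ := by
          rw [← fderiv_apply_one_eq_deriv]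
          calc ‖fderiv ℝ y t 1‖ ≤ ‖fderiv ℝ y t‖ * ‖(1:ℝ)‖ :=
              ContinuousLinearMap.le_opNorm _ _
            _ = ‖fderiv ℝ y t‖ := by simp
        calc |deriv y t| ≤ ‖fderiv ℝ y t‖ := h2
          _ ≤ (L.toNNReal : ℝ) := h1
          _ = L := by rw [Real.coe_toNNReal L hL]
      rw [arcElt, hK]
      refine Real.sqrt_le_sqrt ?_
      have : deriv y t ^ 2 ≤ L ^ 2 := by
        rw [← _root_.sq_abs]
        exact pow_le_pow_left₀ (abs_nonneg _) hderiv 2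
      linarith
    have hprod : (∏ i, Real.rpow (‖graphPt y t - z i‖) (-(βi i)))
        ≤ ∑ i, c i * |t - x i| ^ (-β) := by
      have h1 : ∀ i : Fin m,
          Real.rpow (‖graphPt y t - z i‖) (-(βi i)) ≤ |t - x i| ^ (-(βi i)) := by
        intro i
        have hne : t ≠ x i := fun h => htx i h.symm
        have hpos' : 0 < |t - x i| := abs_pos.2 (sub_ne_zero.2 hne)
        have hle : |t - x i| ≤ ‖graphPt y t - z i‖ := by
          have hre : (graphPt y t - z i).re = t - x i := by
            simp [graphPt, hx]
          have := Complex.abs_re_le_norm (graphPt y t - z i)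
          rwa [hre] at this
        exact Real.rpow_le_rpow_of_nonpos hpos' hle (neg_nonpos.2 (hpos i).le)
      calc (∏ i, Real.rpow (‖graphPt y t - z i‖) (-(βi i)))
          ≤ ∏ i, |t - x i| ^ (-(βi i)) :=
            Finset.prod_le_prod
              (fun i _ => Real.rpow_nonneg (norm_nonneg _) _) (fun i _ => h1 i)
        _ = ∏ i, (|t - x i| ^ (-β)) ^ (c i) := by
            refine Finset.prod_congr rfl fun i _ => ?_
            rw [← Real.rpow_mul (abs_nonneg _)]
            congr 1
            simp only [hc]; field_simp
        _ ≤ ∑ i, c i * (|t - x i| ^ (-β)) :=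
            Real.geom_mean_le_arith_mean_weighted _ _ _ (fun i _ => hc0 i) hcsum
              (fun i _ => Real.rpow_nonneg (abs_nonneg _) _)
    have hsum_nonneg : 0 ≤ ∑ i, c i * |t - x i| ^ (-β) :=
      Finset.sum_nonneg fun i _ => mul_nonneg (hc0 i) (Real.rpow_nonneg (abs_nonneg _) _)
    have harc0 : 0 ≤ arcElt y t := Real.sqrt_nonneg _
    have hmul : (∏ i, Real.rpow (‖graphPt y t - z i‖) (-(βi i))) * arcElt y t
        ≤ (∑ i, c i * |t - x i| ^ (-β)) * K :=
      mul_le_mul hprod harc harc0 hsum_nonneg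
    calc ENNReal.ofReal
          ((∏ i, Real.rpow (‖graphPt y t - z i‖) (-(βi i))) * arcElt y t)
        ≤ ENNReal.ofReal ((∑ i, c i * |t - x i| ^ (-β)) * K) := ENNReal.ofReal_le_ofReal hmul
      _ = ∑ i, ENNReal.ofReal (c i * K) * ENNReal.ofReal (|t - x i| ^ (-β)) := by
          rw [Finset.sum_mul, ENNReal.ofReal_sum_of_nonneg (fun i _ =>
            mul_nonneg (mul_nonneg (hc0 i) (Real.rpow_nonneg (abs_nonneg _) _)) hK0)]
          refine Finset.sum_congr rfl fun i _ => ?_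
          rw [show c i * |t - x i| ^ (-β) * K = (c i * K) * (|t - x i| ^ (-β)) by ring,
            ENNReal.ofReal_mul (mul_nonneg (hc0 i) hK0)]
  calc ∫⁻ t in Set.Icc a b,
        ENNReal.ofReal
          ((∏ i, Real.rpow (‖graphPt y t - z i‖) (-(βi i))) * arcElt y t)
      ≤ ∫⁻ t in Set.Icc a b,
          ∑ i, ENNReal.ofReal (c i * K) * ENNReal.ofReal (|t - x i| ^ (-β)) :=
        lintegral_mono_ae key
    _ = ∑ i, ∫⁻ t in Set.Icc a b,
          ENNReal.ofReal (c i * K) * ENNReal.ofReal (|t - x i| ^ (-β)) := by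
        refine lintegral_finset_sum' _ fun i _ => ?_
        exact (measurable_const.mul
          (by fun_prop : Measurable fun t : ℝ => ENNReal.ofReal (|t - x i| ^ (-β)))).aemeasurable
    _ = ∑ i, ENNReal.ofReal (c i * K)
          * ∫⁻ t in Set.Icc a b, ENNReal.ofReal (|t - x i| ^ (-β)) :=
        Finset.sum_congr rfl fun i _ => lintegral_const_mul' _ _ ENNReal.ofReal_ne_top
    _ ≤ ∑ i, ENNReal.ofReal (c i * K) * J :=
        Finset.sum_le_sum fun i _ => mul_le_mul_right (single_bound hβ0 hab' (x i)) _
    _ = ENNReal.ofReal K * J := by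
        rw [← Finset.sum_mul, ← ENNReal.ofReal_sum_of_nonneg
          (fun i _ => mul_nonneg (hc0 i) hK0), ← Finset.sum_mul, hcsum, one_mul]
    _ ≤ ENNReal.ofReal (K * J.toReal) := by
        rw [ENNReal.ofReal_mul hK0, ENNReal.ofReal_toReal hJtop]
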